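/- arXiv:1912.03614 — 2 statements merged into one kernel-verified Lean document; each statement's English description precedes it below -/
import Mathlib

section
/- Let Q be a real symmetric k×k matrix and let h, e ∈ ℝ^k be vectors. Then Q + δ (h eᵀ + e hᵀ) < 0 holds for every scalar δ ∈ [-1,1] if and only if there exists a scalar ε > 0 such that Q + ε h hᵀ + ε⁻¹ e eᵀ < 0. -/
open Matrix

/-- A real matrix is negative definite: `xᵀ M x < 0` for every nonzero vector `x`. -/
def NegDef {ι : Type*} [Fintype ι] (M : Matrix ι ι ℝ) : Prop :=
  ∀ x : ι → ℝ, x ≠ 0 → x ⬝ᵥ M.mulVec x < 0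

set_option maxHeartbeats 2000000 in
private lemma petersen_core {k : ℕ} (B : (Fin k → ℝ) → (Fin k → ℝ) → ℝ)
    (Badd : ∀ u v w, B (u + v) w = B u w + B v w)
    (Bsmul : ∀ (c : ℝ) (u v : Fin k → ℝ), B (c • u) v = c * B u v)
    (Bsymm : ∀ u v, B u v = B v u)
    (Bpos : ∀ x, x ≠ 0 → 0 < B x x)
    (p q : Fin k → ℝ)
    (hyp : ∀ x, x ≠ 0 → 2 * |B p x * B q x| < B x x) :
    ∃ ε : ℝ, 0 < ε ∧ ∀ x, x ≠ 0 → ε * (B p x) ^ 2 + ε⁻¹ * (B q x) ^ 2 < B x x := by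
  have Bzero : ∀ v, B 0 v = 0 := fun v => by
    have := Bsmul 0 0 v
    simpa using this
  have Bnonneg : ∀ x, 0 ≤ B x x := fun x => by
    rcases eq_or_ne x 0 with rfl | hx
    · simp [Bzero]
    · exact (Bpos x hx).le
  have Beq0 : ∀ x, B x x = 0 → x = 0 := by
    intro x hx
    by_contra hne
    exact (ne_of_gt (Bpos x hne)) hx
  have Badd₂ : ∀ u v w, B u (v + w) = B u v + B u w := fun u v w => by
    rw [Bsymm u (v + w), Badd, Bsymm v u, Bsymm w u]
  have Bsmul₂ : ∀ (c : ℝ) u v, B u (c • v) = c * B u v := fun c u v => by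
    rw [Bsymm u (c • v), Bsmul, Bsymm v u]
  have expandL : ∀ (a c : ℝ) (u u' x : Fin k → ℝ),
      B (a • u + c • u') x = a * B u x + c * B u' x := fun a c u u' x => by
    rw [Badd, Bsmul, Bsmul]
  have expandR : ∀ (a c : ℝ) (x u u' : Fin k → ℝ),
      B x (a • u + c • u') = a * B x u + c * B x u' := fun a c x u u' => by
    rw [Badd₂, Bsmul₂, Bsmul₂]
  have expand2 : ∀ (a c : ℝ) (u u' : Fin k → ℝ),
      B (a • u + c • u') (a • u + c • u')
        = a ^ 2 * B u u + 2 * a * c * B u u' + c ^ 2 * B u' u' := by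
    intro a c u u'
    rw [expandL, expandR, expandR, Bsymm u' u]
    ring
  have expand3 : ∀ (c₀ c₁ c₂ : ℝ) (x w v : Fin k → ℝ),
      B (c₀ • x + c₁ • w + c₂ • v) (c₀ • x + c₁ • w + c₂ • v)
        = c₀ ^ 2 * B x x + c₁ ^ 2 * B w w + c₂ ^ 2 * B v v
          + 2 * c₀ * c₁ * B x w + 2 * c₀ * c₂ * B x v + 2 * c₁ * c₂ * B w v := by
    intro c₀ c₁ c₂ x w v
    have h1 : B (c₀ • x + c₁ • w + c₂ • v) (c₀ • x + c₁ • w + c₂ • v)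
        = B (c₀ • x + c₁ • w) (c₀ • x + c₁ • w) + c₂ * B (c₀ • x + c₁ • w) v
          + (c₂ * B v (c₀ • x + c₁ • w) + c₂ ^ 2 * B v v) := by
      rw [Badd, Badd₂, Bsmul₂, Badd₂ (c₂ • v), Bsmul, Bsmul₂, Bsmul]
      ring
    rw [h1, expand2, expandL, Bsymm v (c₀ • x + c₁ • w), expandL, Bsymm x w,
      Bsymm x v, Bsymm w v]
    ring
  -- Cauchy-Schwarz
  have CS : ∀ w x, (B w x) ^ 2 ≤ B w w * B x x := by
    intro w x
    rcases (Bnonneg w).eq_or_lt' with hW | hW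
    · have hw0 : w = 0 := Beq0 w hW
      simp [hw0, Bzero]
    · have h0 := Bnonneg ((B w w) • x + (-(B w x)) • w)
      rw [expand2] at h0
      rw [Bsymm x w] at h0
      nlinarith [h0, hW]
  set H := B p p with hHdef
  set E := B q q with hEdef
  set K := B p q with hKdef
  rcases (Bnonneg p).eq_or_lt' with hH | hH
  · -- H = 0, so p = 0
    have hp0 : p = 0 := Beq0 p hH
    have hBp : ∀ x, B p x = 0 := fun x => by rw [hp0]; exact Bzero x
    rcases (Bnonneg q).eq_or_lt' with hE | hE
    · have hq0 : q = 0 := Beq0 q hE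
      refine ⟨1, one_pos, fun x hx => ?_⟩
      rw [hBp, hq0, Bzero]
      simpa using Bpos x hx
    · refine ⟨2 * E, by linarith, fun x hx => ?_⟩
      have hcs := CS q x
      have hBx := Bpos x hx
      have hEpos : (0 : ℝ) < 2 * E := by linarith
      have h1 : (2 * E)⁻¹ * (B q x) ^ 2 ≤ (2 * E)⁻¹ * (E * B x x) :=
        mul_le_mul_of_nonneg_left hcs (inv_nonneg.mpr hEpos.le)
      have h2 : (2 * E)⁻¹ * (E * B x x) = B x x / 2 := by
        have hE0 : E ≠ 0 := by linarith
        field_simp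
      rw [hBp]
      nlinarith [h1, h2, hBx]
  rcases (Bnonneg q).eq_or_lt' with hE | hE
  · -- E = 0, so q = 0
    have hq0 : q = 0 := Beq0 q hE
    have hBq : ∀ x, B q x = 0 := fun x => by rw [hq0]; exact Bzero x
    refine ⟨(2 * H)⁻¹, inv_pos.mpr (by linarith), fun x hx => ?_⟩
    have hcs := CS p x
    have hBx := Bpos x hx
    have hHpos : (0 : ℝ) < 2 * H := by linarith
    have h1 : (2 * H)⁻¹ * (B p x) ^ 2 ≤ (2 * H)⁻¹ * (H * B x x) :=
      mul_le_mul_of_nonneg_left hcs (inv_nonneg.mpr hHpos.le)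
    have h2 : (2 * H)⁻¹ * (H * B x x) = B x x / 2 := by
      have hH0 : H ≠ 0 := by linarith
      field_simp
    rw [hBq, inv_inv]
    nlinarith [h1, h2, hBx]
  -- main case : H > 0, E > 0
  obtain ⟨sh, hshpos, hsh⟩ : ∃ sh : ℝ, 0 < sh ∧ sh ^ 2 = H :=
    ⟨Real.sqrt H, Real.sqrt_pos.mpr hH, Real.sq_sqrt hH.le⟩
  obtain ⟨se, hsepos, hse⟩ : ∃ se : ℝ, 0 < se ∧ se ^ 2 = E :=
    ⟨Real.sqrt E, Real.sqrt_pos.mpr hE, Real.sq_sqrt hE.le⟩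
  have hr : (0 : ℝ) < sh * se := mul_pos hshpos hsepos
  obtain ⟨σ, hσK, hσ2, hσabs⟩ : ∃ σ : ℝ, σ * K = |K| ∧ σ ^ 2 = 1 ∧ |σ| = 1 := by
    by_cases hK : 0 ≤ K
    · exact ⟨1, by simp [abs_of_nonneg hK], by norm_num, by norm_num⟩
    · push_neg at hK
      exact ⟨-1, by simp [abs_of_neg hK], by norm_num, by norm_num⟩
  have hσKnn : 0 ≤ σ * K := by rw [hσK]; exact abs_nonneg K
  have hspos : 0 < σ * K + sh * se := by linarith
  set w : Fin k → ℝ := se • p + (σ * sh) • q with hwdef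
  set v : Fin k → ℝ := se • p + (-(σ * sh)) • q with hvdef
  have hWw : B w w = 2 * (sh * se) * (σ * K + sh * se) := by
    rw [hwdef, expand2]
    linear_combination (-(se ^ 2)) * hsh + (-(sh ^ 2)) * hse + (sh ^ 2 * E) * hσ2
  have hVv : B v v = 2 * (sh * se) * (sh * se - σ * K) := by
    rw [hvdef, expand2]
    linear_combination (-(se ^ 2)) * hsh + (-(sh ^ 2)) * hse + (sh ^ 2 * E) * hσ2
  have hwv : B w v = 0 := by
    rw [hwdef, hvdef, expandL, expandR, expandR, Bsymm q p]
    linear_combination (-(se ^ 2)) * hsh + (sh ^ 2) * hse + (-(sh ^ 2 * E)) * hσ2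
  have hpw : B p w = sh * (σ * K + sh * se) := by
    rw [hwdef, expandR]
    linear_combination (-se) * hsh
  have hqw : B q w = σ * se * (σ * K + sh * se) := by
    rw [hwdef, expandR, Bsymm q p]
    linear_combination (-(se * K)) * hσ2 + (-(σ * sh)) * hse
  have hWpos : 0 < B w w := by
    rw [hWw]
    nlinarith [hr, hspos]
  have hwne : w ≠ 0 := by
    intro h0
    have hz : B w w = 0 := by rw [h0]; exact Bzero 0
    linarith [hWpos]
  have hpqw : B p w * B q w = σ * ((sh * se) * (σ * K + sh * se) ^ 2) := by
    rw [hpw, hqw]; ring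
  have habs : |B p w * B q w| = (sh * se) * (σ * K + sh * se) ^ 2 := by
    rw [hpqw, abs_mul]
    rw [hσabs, one_mul, abs_of_nonneg (mul_nonneg hr.le (sq_nonneg _))]
  have hs1 : σ * K + sh * se < 1 := by
    have hhw := hyp w hwne
    rw [habs, hWw] at hhw
    nlinarith [hhw, mul_pos hr hspos, hr, hspos]
  have hVleW : B v v ≤ B w w := by
    rw [hVv, hWw]
    nlinarith [hr, hσKnn]
  have bessel : ∀ x, (B w x) ^ 2 + (B v x) ^ 2 ≤ B w w * B x x := by
    intro x
    rcases (Bnonneg v).eq_or_lt' with hV | hV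
    · have hv0 : v = 0 := Beq0 v hV
      have hvx : B v x = 0 := by rw [hv0]; exact Bzero x
      have hcs := CS w x
      rw [hvx]
      nlinarith [hcs]
    · have h0 := Bnonneg ((B w w * B v v) • x + (-(B w x * B v v)) • w
        + (-(B v x * B w w)) • v)
      rw [expand3, Bsymm x w, Bsymm x v, hwv] at h0
      have hT : B v v * (B w x) ^ 2 + B w w * (B v x) ^ 2 ≤ (B w w * B v v) * B x x := by
        nlinarith [h0, mul_pos hWpos hV]
      nlinarith [hT, hV, mul_nonneg (sub_nonneg.mpr hVleW) (sq_nonneg (B v x))]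
  refine ⟨se / sh, div_pos hsepos hshpos, fun x hx => ?_⟩
  have hBx := Bpos x hx
  have hbes := bessel x
  rw [hWw] at hbes
  have hwx : B w x = se * B p x + σ * sh * B q x := by
    rw [hwdef, expandL]
  have hvx : B v x = se * B p x + -(σ * sh) * B q x := by
    rw [hvdef, expandL]
  have e1 : (B w x) ^ 2 + (B v x) ^ 2
      = 2 * (se ^ 2 * (B p x) ^ 2 + sh ^ 2 * (B q x) ^ 2) := by
    rw [hwx, hvx]
    linear_combination (2 * sh ^ 2 * (B q x) ^ 2) * hσ2
  rw [e1] at hbes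
  have hεinv : (se / sh)⁻¹ = sh / se := by rw [inv_div]
  rw [hεinv]
  have hgoal_eq : se / sh * (B p x) ^ 2 + sh / se * (B q x) ^ 2
      = (se ^ 2 * (B p x) ^ 2 + sh ^ 2 * (B q x) ^ 2) / (sh * se) := by
    field_simp
  rw [hgoal_eq, div_lt_iff₀ hr]
  nlinarith [hbes, mul_pos hr hBx, hs1]

set_option maxHeartbeats 1000000 in
theorem robust_rank_one_scalar_uncertainty (k : ℕ)
    (Q : Matrix (Fin k) (Fin k) ℝ) (hQ : Q.IsSymm) (h e : Fin k → ℝ) :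
    (∀ δ : ℝ, δ ∈ Set.Icc (-1 : ℝ) 1 →
        NegDef (Q + δ • (vecMulVec h e + vecMulVec e h))) ↔
    (∃ ε : ℝ, 0 < ε ∧
        NegDef (Q + ε • vecMulVec h h + ε⁻¹ • vecMulVec e e)) := by
  have qid : ∀ (u v x : Fin k → ℝ), x ⬝ᵥ (vecMulVec u v) *ᵥ x = (u ⬝ᵥ x) * (v ⬝ᵥ x) := by
    intro u v x
    simp only [dotProduct, mulVec, vecMulVec_apply, Finset.mul_sum, Finset.sum_mul]
    rw [Finset.sum_comm]
    apply Finset.sum_congr rfl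
    intro i _
    apply Finset.sum_congr rfl
    intro j _
    ring
  have hquad : ∀ (δ : ℝ) (x : Fin k → ℝ),
      x ⬝ᵥ (Q + δ • (vecMulVec h e + vecMulVec e h)) *ᵥ x
        = x ⬝ᵥ Q *ᵥ x + 2 * δ * ((h ⬝ᵥ x) * (e ⬝ᵥ x)) := by
    intro δ x
    simp only [add_mulVec, dotProduct_add, smul_mulVec, dotProduct_smul,
      smul_eq_mul, qid]
    ring
  have hquad2 : ∀ (ε : ℝ) (x : Fin k → ℝ),
      x ⬝ᵥ (Q + ε • vecMulVec h h + ε⁻¹ • vecMulVec e e) *ᵥ x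
        = x ⬝ᵥ Q *ᵥ x + ε * (h ⬝ᵥ x) ^ 2 + ε⁻¹ * (e ⬝ᵥ x) ^ 2 := by
    intro ε x
    simp only [add_mulVec, dotProduct_add, smul_mulVec, dotProduct_smul,
      smul_eq_mul, qid]
    ring
  constructor
  · intro hyp
    have hQneg : ∀ x : Fin k → ℝ, x ≠ 0 → x ⬝ᵥ Q *ᵥ x < 0 := by
      intro x hx
      have h0 := hyp 0 ⟨by norm_num, by norm_num⟩ x hx
      rw [hquad 0 x] at h0
      linarith
    set B : (Fin k → ℝ) → (Fin k → ℝ) → ℝ := fun u v => u ⬝ᵥ (-Q) *ᵥ v with hBdef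
    have Badd : ∀ u v w, B (u + v) w = B u w + B v w := by
      intro u v w
      simp [hBdef, add_dotProduct]
    have Bsmul : ∀ (c : ℝ) (u v : Fin k → ℝ), B (c • u) v = c * B u v := by
      intro c u v
      simp [hBdef, smul_dotProduct]
    have Bsymm : ∀ u v, B u v = B v u := by
      intro u v
      simp only [hBdef]
      have ht : (-Q)ᵀ = -Q := by rw [transpose_neg, hQ]
      rw [dotProduct_mulVec, ← mulVec_transpose, ht, dotProduct_comm]
    have Bpos : ∀ x, x ≠ 0 → 0 < B x x := by
      intro x hx
      have := hQneg x hx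
      simp only [hBdef, neg_mulVec, dotProduct_neg]
      linarith
    -- find p, q with (-Q) *ᵥ p = h, (-Q) *ᵥ q = e
    have hinj : Function.Injective (Matrix.mulVecLin (-Q) : (Fin k → ℝ) →ₗ[ℝ] (Fin k → ℝ)) := by
      intro a b hab
      by_contra hne
      have hsub : a - b ≠ 0 := sub_ne_zero.mpr hne
      have hz : (-Q) *ᵥ (a - b) = 0 := by
        have := sub_eq_zero.mpr hab
        rw [← map_sub] at this
        simpa [Matrix.mulVecLin_apply, neg_mulVec] using this
      have hpos := Bpos (a - b) hsub
      rw [hBdef] at hpos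
      simp only at hpos
      rw [hz] at hpos
      simp at hpos
    have hsurj := LinearMap.surjective_of_injective hinj
    obtain ⟨p, hp⟩ := hsurj h
    obtain ⟨q, hq⟩ := hsurj e
    rw [Matrix.mulVecLin_apply] at hp hq
    have hBp : ∀ x, B p x = h ⬝ᵥ x := by
      intro x
      rw [Bsymm]
      simp only [hBdef]
      rw [hp, dotProduct_comm]
    have hBq : ∀ x, B q x = e ⬝ᵥ x := by
      intro x
      rw [Bsymm]
      simp only [hBdef]
      rw [hq, dotProduct_comm]
    have hyp' : ∀ x, x ≠ 0 → 2 * |B p x * B q x| < B x x := by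
      intro x hx
      have h1 := hyp 1 ⟨by norm_num, le_refl 1⟩ x hx
      have h2 := hyp (-1) ⟨le_refl (-1), by norm_num⟩ x hx
      rw [hquad 1 x] at h1
      rw [hquad (-1) x] at h2
      rw [hBp, hBq]
      have hBxx : B x x = -(x ⬝ᵥ Q *ᵥ x) := by
        simp [hBdef, neg_mulVec, dotProduct_neg]
      rw [hBxx]
      rcases abs_cases ((h ⬝ᵥ x) * (e ⬝ᵥ x)) with ⟨habs, _⟩ | ⟨habs, _⟩ <;> rw [habs] <;> linarith
    obtain ⟨ε, hε, hbound⟩ := petersen_core B Badd Bsmul Bsymm Bpos p q hyp'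
    refine ⟨ε, hε, ?_⟩
    intro x hx
    rw [hquad2 ε x]
    have hbx := hbound x hx
    rw [hBp, hBq] at hbx
    have hBxx : B x x = -(x ⬝ᵥ Q *ᵥ x) := by
      simp [hBdef, neg_mulVec, dotProduct_neg]
    rw [hBxx] at hbx
    linarith
  · rintro ⟨ε, hε, hneg⟩ δ hδ x hx
    have h1 := hneg x hx
    rw [hquad2 ε x] at h1
    rw [hquad δ x]
    have hinv : ε * ε⁻¹ = 1 := mul_inv_cancel₀ (ne_of_gt hε)
    have hd1 : (0:ℝ) ≤ 1 + δ := by linarith [hδ.1]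
    have hd2 : (0:ℝ) ≤ 1 - δ := by linarith [hδ.2]
    nlinarith [h1, hε, hinv, mul_nonneg hd1 (sq_nonneg (ε * (h ⬝ᵥ x) - (e ⬝ᵥ x))),
      mul_nonneg hd2 (sq_nonneg (ε * (h ⬝ᵥ x) + (e ⬝ᵥ x))), inv_pos.mpr hε]
end

section
/- Let Q be a real symmetric k×k matrix, H a real k×r matrix, E a real s×k matrix, and R a real symmetric positive definite s×s matrix. Then Q + H F E + Eᵀ Fᵀ Hᵀ < 0 holds for every real r×s matrix F satisfying Fᵀ F ≤ R (in the Loewner order, i.e., R - Fᵀ F is positive semidefinite) if and only if there exists a scalar ε > 0 such that Q + ε² H Hᵀ + ε⁻² Eᵀ R E < 0. -/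
set_option maxHeartbeats 1000000

open Matrix

open Filter Topology Set

section helpers
variable {n m p q : Type*} [Fintype n] [Fintype m] [Fintype p] [Fintype q]
variable {n m p q : Type*} [Fintype n] [Fintype m] [Fintype p] [Fintype q]

lemma quad_symm_of (P : Matrix n n ℝ) (hs : Pᵀ = P) (u v : n → ℝ) :
    u ⬝ᵥ P *ᵥ v = v ⬝ᵥ P *ᵥ u := by
  nth_rewrite 1 [← hs]
  rw [dotProduct_mulVec, vecMul_transpose, dotProduct_comm]

lemma quad_expand (P : Matrix n n ℝ) (hs : Pᵀ = P) (u v : n → ℝ) (t : ℝ) :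
    (u + t • v) ⬝ᵥ P *ᵥ (u + t • v)
      = (v ⬝ᵥ P *ᵥ v) * (t * t) + (2 * (u ⬝ᵥ P *ᵥ v)) * t + u ⬝ᵥ P *ᵥ u := by
  have h := quad_symm_of P hs v u
  simp only [mulVec_add, mulVec_smul, dotProduct_add, add_dotProduct,
    dotProduct_smul, smul_dotProduct, smul_eq_mul]
  rw [h]; ring

lemma cs_psd (P : Matrix n n ℝ) (hs : Pᵀ = P) (hpsd : ∀ y, 0 ≤ y ⬝ᵥ P *ᵥ y)
    (u v : n → ℝ) : (u ⬝ᵥ P *ᵥ v) ^ 2 ≤ (u ⬝ᵥ P *ᵥ u) * (v ⬝ᵥ P *ᵥ v) := by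
  have h : ∀ t : ℝ, 0 ≤ (v ⬝ᵥ P *ᵥ v) * (t * t) + (2 * (u ⬝ᵥ P *ᵥ v)) * t + u ⬝ᵥ P *ᵥ u := by
    intro t; rw [← quad_expand P hs u v t]; exact hpsd _
  have hd := discrim_le_zero h
  rw [discrim] at hd
  nlinarith [hd]

lemma ker_psd (P : Matrix n n ℝ) (hs : Pᵀ = P) (hpsd : ∀ y, 0 ≤ y ⬝ᵥ P *ᵥ y)
    {x : n → ℝ} (hx : x ⬝ᵥ P *ᵥ x = 0) : P *ᵥ x = 0 := by
  set y := P *ᵥ x with hy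
  have hb : x ⬝ᵥ P *ᵥ y = y ⬝ᵥ y := by rw [quad_symm_of P hs x y, hy]
  have hq : ∀ t : ℝ, 0 ≤ (y ⬝ᵥ P *ᵥ y) * (t * t) + (2 * (y ⬝ᵥ y)) * t + 0 := by
    intro t
    have h0 := hpsd (x + t • y)
    rw [quad_expand P hs x y t, hb, hx] at h0
    linarith
  have hd := discrim_le_zero hq
  rw [discrim] at hd
  have h1 : y ⬝ᵥ y = 0 := by nlinarith [hd]
  exact dotProduct_self_eq_zero.mp h1

lemma quad_sandwich (A : Matrix n p ℝ) (M : Matrix p q ℝ) (B : Matrix q n ℝ) (x : n → ℝ) :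
    x ⬝ᵥ (A * M * B) *ᵥ x = (Aᵀ *ᵥ x) ⬝ᵥ M *ᵥ (B *ᵥ x) := by
  rw [← mulVec_mulVec, ← mulVec_mulVec, mulVec_transpose, dotProduct_mulVec]

lemma quad_mul (A : Matrix n p ℝ) (B : Matrix p n ℝ) (x : n → ℝ) :
    x ⬝ᵥ (A * B) *ᵥ x = (Aᵀ *ᵥ x) ⬝ᵥ (B *ᵥ x) := by
  rw [← mulVec_mulVec, mulVec_transpose, dotProduct_mulVec]

lemma my_vecMulVec_mulVec (a : n → ℝ) (w : m → ℝ) (y : m → ℝ) :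
    (vecMulVec a w) *ᵥ y = (w ⬝ᵥ y) • a := by
  funext i
  simp [vecMulVec, mulVec, dotProduct, Finset.mul_sum, mul_comm, mul_assoc, mul_left_comm]

lemma quad_smul (M : Matrix n n ℝ) (c : ℝ) (z : n → ℝ) :
    (c • z) ⬝ᵥ M *ᵥ (c • z) = (c * c) * (z ⬝ᵥ M *ᵥ z) := by
  simp only [mulVec_smul, dotProduct_smul, smul_dotProduct, smul_eq_mul]; ring

lemma cont_quad (M : Matrix n n ℝ) : Continuous fun x : n → ℝ => x ⬝ᵥ M *ᵥ x := by
  simp only [dotProduct, mulVec]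
  exact continuous_finset_sum _ fun i _ =>
    (continuous_apply i).mul (continuous_finset_sum _ fun j _ =>
      continuous_const.mul (continuous_apply j))

lemma cont_dot : Continuous fun v : n → ℝ => v ⬝ᵥ v := by
  simp only [dotProduct]
  exact continuous_finset_sum _ fun i _ => (continuous_apply i).mul (continuous_apply i)

lemma dot_self_nonneg (v : n → ℝ) : 0 ≤ v ⬝ᵥ v :=
  Finset.sum_nonneg fun i _ => mul_self_nonneg _

variable {n : Type*} [Fintype n]

lemma dot_self_pos {v : n → ℝ} (hv : v ≠ 0) : 0 < v ⬝ᵥ v := by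
  rcases lt_or_eq_of_le (dot_self_nonneg v) with h | h
  · exact h
  · exact absurd (dotProduct_self_eq_zero.mp h.symm) hv

lemma unit_of_ne_zero {v : n → ℝ} (hv : v ≠ 0) :
    ((Real.sqrt (v ⬝ᵥ v))⁻¹ • v) ⬝ᵥ ((Real.sqrt (v ⬝ᵥ v))⁻¹ • v) = 1 := by
  have hc : 0 < v ⬝ᵥ v := dot_self_pos hv
  rw [smul_dotProduct, dotProduct_smul, smul_eq_mul, smul_eq_mul, ← mul_assoc, ← mul_inv,
    Real.mul_self_sqrt hc.le]
  exact inv_mul_cancel₀ hc.ne'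

lemma quad_smul' (M : Matrix n n ℝ) (c : ℝ) (z : n → ℝ) :
    (c • z) ⬝ᵥ M *ᵥ (c • z) = (c * c) * (z ⬝ᵥ M *ᵥ z) := by
  simp only [mulVec_smul, dotProduct_smul, smul_dotProduct, smul_eq_mul]; ring

lemma dot_smul_smul (c d : ℝ) (v w : n → ℝ) :
    (c • v) ⬝ᵥ (d • w) = (c * d) * (v ⬝ᵥ w) := by
  rw [smul_dotProduct, dotProduct_smul, smul_eq_mul, smul_eq_mul]; ring

lemma quad_neg (M : Matrix n n ℝ) (v : n → ℝ) :
    (-v) ⬝ᵥ M *ᵥ (-v) = v ⬝ᵥ M *ᵥ v := by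
  have h : (-v) = (-1 : ℝ) • v := by simp
  rw [h, quad_smul']; ring

end helpers

lemma petersen_aux {k : ℕ} {S : Set (Fin k → ℝ)} (hS : IsCompact S)
    {f g h : (Fin k → ℝ) → ℝ} (hf : Continuous f) (hg : Continuous g) (hh : Continuous h)
    {m : ℝ → ℝ} {τ₁ τ₂ τs σ : ℝ} (hτ1 : 0 < τ₁) (hτs : τs ∈ Set.Icc τ₁ τ₂)
    (hσ : σ * σ = 1)
    (hle : ∀ τ, ∀ x ∈ S, f x + τ * g x + τ⁻¹ * h x ≤ m τ)
    (hmin : ∀ τ ∈ Set.Icc τ₁ τ₂, m τs ≤ m τ)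
    {t : ℕ → ℝ} (htm : ∀ n, t n ∈ Set.Icc τ₁ τ₂) (htd : ∀ n, 0 < (t n - τs) * σ)
    (htt : Tendsto t atTop (𝓝 τs))
    (hx : ∀ n, ∃ x ∈ S, f x + t n * g x + (t n)⁻¹ * h x = m (t n)) :
    ∃ x ∈ S, f x + τs * g x + τs⁻¹ * h x = m τs ∧ 0 ≤ (τs ^ 2 * g x - h x) * σ := by
  choose xx hxxS hxxe using hx
  obtain ⟨z, hzS, φ, hφmono, hzt⟩ := hS.tendsto_subseq hxxS
  have hτs0 : 0 < τs := lt_of_lt_of_le hτ1 hτs.1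
  have ht0 : ∀ n, 0 < t n := fun n => lt_of_lt_of_le hτ1 (htm n).1
  have httφ : Tendsto (fun n => t (φ n)) atTop (𝓝 τs) := htt.comp hφmono.tendsto_atTop
  have htf : Tendsto (fun n => f (xx (φ n))) atTop (𝓝 (f z)) := ((hf.tendsto z).comp hzt)
  have htg : Tendsto (fun n => g (xx (φ n))) atTop (𝓝 (g z)) := ((hg.tendsto z).comp hzt)
  have hth : Tendsto (fun n => h (xx (φ n))) atTop (𝓝 (h z)) := ((hh.tendsto z).comp hzt)
  have hinv : Tendsto (fun n => (t (φ n))⁻¹) atTop (𝓝 τs⁻¹) := httφ.inv₀ hτs0.ne'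
  refine ⟨z, hzS, ?_, ?_⟩
  · have hψt : Tendsto (fun n => f (xx (φ n)) + t (φ n) * g (xx (φ n))
        + (t (φ n))⁻¹ * h (xx (φ n))) atTop (𝓝 (f z + τs * g z + τs⁻¹ * h z)) :=
      (htf.add (httφ.mul htg)).add (hinv.mul hth)
    have hterm : ∀ n, m τs ≤ f (xx (φ n)) + t (φ n) * g (xx (φ n))
        + (t (φ n))⁻¹ * h (xx (φ n)) := by
      intro n; rw [hxxe (φ n)]; exact hmin _ (htm _)
    exact le_antisymm (hle τs z hzS) (ge_of_tendsto' hψt hterm)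
  · -- sign condition
    have hBσ : ∀ n, 0 ≤ (g (xx (φ n)) - h (xx (φ n)) * ((t (φ n))⁻¹ * τs⁻¹)) * σ := by
      intro n
      set x0 := xx (φ n)
      set a := t (φ n) with ha
      have h1 : m τs ≤ f x0 + a * g x0 + a⁻¹ * h x0 := by
        rw [hxxe (φ n)]; exact hmin _ (htm _)
      have h2 : f x0 + τs * g x0 + τs⁻¹ * h x0 ≤ m τs := hle τs x0 (hxxS (φ n))
      have h3 : 0 ≤ (a - τs) * g x0 + (a⁻¹ - τs⁻¹) * h x0 := by linarith
      have ha0 : a ≠ 0 := (ht0 (φ n)).ne'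
      have hfe : a⁻¹ - τs⁻¹ = -(a - τs) * (a⁻¹ * τs⁻¹) := by
        field_simp
        ring
      have h4 : 0 ≤ (a - τs) * (g x0 - h x0 * (a⁻¹ * τs⁻¹)) := by
        rw [hfe] at h3; ring_nf at h3 ⊢; linarith
      have hAσ : 0 < (a - τs) * σ := htd (φ n)
      nlinarith [h4, hAσ, hσ]
    have hlim : Tendsto (fun n => (g (xx (φ n)) - h (xx (φ n)) * ((t (φ n))⁻¹ * τs⁻¹)) * σ)
        atTop (𝓝 ((g z - h z * (τs⁻¹ * τs⁻¹)) * σ)) :=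
      ((htg.sub (hth.mul (hinv.mul tendsto_const_nhds))).mul tendsto_const_nhds)
    have h5 : 0 ≤ (g z - h z * (τs⁻¹ * τs⁻¹)) * σ := ge_of_tendsto' hlim hBσ
    have h6 : (τs ^ 2 * g z - h z) * σ = (τs * τs) * ((g z - h z * (τs⁻¹ * τs⁻¹)) * σ) := by
      have e : τs * τs⁻¹ = 1 := mul_inv_cancel₀ hτs0.ne'
      linear_combination (h z * σ * (τs * τs⁻¹ + 1)) * e
    rw [h6]
    exact mul_nonneg (mul_pos hτs0 hτs0).le h5


lemma petersen_core_s5 {k : ℕ} (hk : 0 < k) (Q G K : Matrix (Fin k) (Fin k) ℝ)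
    (hQs : Qᵀ = Q) (hGs : Gᵀ = G) (hKs : Kᵀ = K)
    {η : ℝ} (hη : 0 < η)
    (hG : ∀ x, η * (x ⬝ᵥ x) ≤ x ⬝ᵥ G *ᵥ x) (hK : ∀ x, η * (x ⬝ᵥ x) ≤ x ⬝ᵥ K *ᵥ x)
    (hpt : ∀ x : Fin k → ℝ, x ⬝ᵥ x = 1 →
      x ⬝ᵥ Q *ᵥ x + 2 * Real.sqrt ((x ⬝ᵥ G *ᵥ x) * (x ⬝ᵥ K *ᵥ x)) < 0) :
    ∃ τ : ℝ, 0 < τ ∧ ∀ x : Fin k → ℝ, x ⬝ᵥ x = 1 →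
      x ⬝ᵥ Q *ᵥ x + τ * (x ⬝ᵥ G *ᵥ x) + τ⁻¹ * (x ⬝ᵥ K *ᵥ x) < 0 := by
  classical
  set f : (Fin k → ℝ) → ℝ := fun x => x ⬝ᵥ Q *ᵥ x with hfdef
  set g : (Fin k → ℝ) → ℝ := fun x => x ⬝ᵥ G *ᵥ x with hgdef
  set h : (Fin k → ℝ) → ℝ := fun x => x ⬝ᵥ K *ᵥ x with hhdef
  have hfc : Continuous f := cont_quad Q
  have hgc : Continuous g := cont_quad G
  have hhc : Continuous h := cont_quad K
  set S : Set (Fin k → ℝ) := {x | x ⬝ᵥ x = 1} with hSdef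
  -- compactness of S
  have hSclosed : IsClosed S := isClosed_eq cont_dot continuous_const
  have hSsub : S ⊆ Metric.closedBall 0 1 := by
    intro x hx
    rw [Metric.mem_closedBall, dist_zero_right]
    rw [pi_norm_le_iff_of_nonneg zero_le_one]
    intro i
    rw [Real.norm_eq_abs, abs_le_one_iff_mul_self_le_one]
    have h1 : x i * x i ≤ x ⬝ᵥ x :=
      Finset.single_le_sum (f := fun j => x j * x j) (fun j _ => mul_self_nonneg _)
        (Finset.mem_univ i)
    have h2 : x ⬝ᵥ x = 1 := hx
    linarith
  have hScomp : IsCompact S :=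
    (isCompact_closedBall (0 : Fin k → ℝ) 1).of_isClosed_subset hSclosed hSsub
  -- nonempty
  set xh : Fin k → ℝ := Pi.single (⟨0, hk⟩ : Fin k) (1 : ℝ) with hxhdef
  have hxhS : xh ∈ S := by
    show xh ⬝ᵥ xh = 1
    simp [hxhdef, dotProduct, Pi.single_apply]
  have hSne : S.Nonempty := ⟨xh, hxhS⟩
  clear_value xh
  -- sup function
  set ψ : ℝ → (Fin k → ℝ) → ℝ := fun τ x => f x + τ * g x + τ⁻¹ * h x with hψdef
  have contψ : ∀ τ, Continuous (ψ τ) := fun τ =>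
    (hfc.add (continuous_const.mul hgc)).add (continuous_const.mul hhc)
  set m : ℝ → ℝ := fun τ => sSup (ψ τ '' S) with hmdef
  have himgc : ∀ τ, IsCompact (ψ τ '' S) := fun τ => hScomp.image (contψ τ)
  have hmem : ∀ τ, m τ ∈ ψ τ '' S := fun τ => (himgc τ).sSup_mem (hSne.image _)
  have hle : ∀ τ, ∀ x ∈ S, ψ τ x ≤ m τ := fun τ x hx =>
    le_csSup (himgc τ).bddAbove (Set.mem_image_of_mem _ hx)
  -- positivity of g, h on S
  have hgpos : ∀ x ∈ S, η ≤ g x := by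
    intro x hx; have := hG x; have hx1 : x ⬝ᵥ x = 1 := hx; rw [hx1, mul_one] at this; exact this
  have hhpos : ∀ x ∈ S, η ≤ h x := by
    intro x hx; have := hK x; have hx1 : x ⬝ᵥ x = 1 := hx; rw [hx1, mul_one] at this; exact this
  -- max of g, h on S
  obtain ⟨xG, hxGS, hxGmax⟩ := hScomp.exists_isMaxOn hSne hgc.continuousOn
  obtain ⟨xK, hxKS, hxKmax⟩ := hScomp.exists_isMaxOn hSne hhc.continuousOn
  set Gmax : ℝ := g xG with hGmaxdef
  set Kmax : ℝ := h xK with hKmaxdef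
  have hGmax : ∀ x ∈ S, g x ≤ Gmax := fun x hx => hxGmax hx
  have hKmax : ∀ x ∈ S, h x ≤ Kmax := fun x hx => hxKmax hx
  have hGmaxpos : 0 < Gmax := lt_of_lt_of_le hη (hgpos xG hxGS)
  have hKmaxpos : 0 < Kmax := lt_of_lt_of_le hη (hhpos xK hxKS)
  clear_value Gmax Kmax
  -- interval
  set τ₂ : ℝ := max 2 ((m 1 + |f xh| + 1) / η) with hτ₂def
  have hτ₂2 : 2 ≤ τ₂ := le_max_left _ _
  have hτ₂div : (m 1 + |f xh| + 1) / η ≤ τ₂ := le_max_right _ _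
  clear_value τ₂
  have hτ₂pos : 0 < τ₂ := by linarith
  set τ₁ : ℝ := τ₂⁻¹ with hτ₁def
  clear_value τ₁
  have hτ₁pos : 0 < τ₁ := by rw [hτ₁def]; exact inv_pos.mpr hτ₂pos
  have hτ₁lt1 : τ₁ < 1 := by
    rw [hτ₁def, inv_lt_one_iff₀]; right; linarith
  have h1mem : (1 : ℝ) ∈ Icc τ₁ τ₂ := ⟨hτ₁lt1.le, by linarith⟩
  -- lower bounds on m forcing interior minimum
  have hmlb : ∀ τ : ℝ, 0 < τ → f xh + τ * η ≤ m τ := by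
    intro τ hτ
    have h1 := hle τ xh hxhS
    have h2 : η ≤ g xh := hgpos xh hxhS
    have h3 : η ≤ h xh := hhpos xh hxhS
    have h4 : 0 ≤ τ⁻¹ * h xh := mul_nonneg (inv_pos.mpr hτ).le (by linarith)
    have h5 : τ * η ≤ τ * g xh := by nlinarith
    have h1' : f xh + τ * g xh + τ⁻¹ * h xh ≤ m τ := h1
    linarith
  have hmlb' : ∀ τ : ℝ, 0 < τ → f xh + τ⁻¹ * η ≤ m τ := by
    intro τ hτ
    have h1 := hle τ xh hxhS
    have h2 : η ≤ g xh := hgpos xh hxhS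
    have h3 : η ≤ h xh := hhpos xh hxhS
    have h4 : 0 ≤ τ * g xh := mul_nonneg hτ.le (by linarith)
    have h5 : τ⁻¹ * η ≤ τ⁻¹ * h xh := by
      have : (0:ℝ) < τ⁻¹ := inv_pos.mpr hτ
      nlinarith
    have h1' : f xh + τ * g xh + τ⁻¹ * h xh ≤ m τ := h1
    linarith
  have hτ₂η : m 1 + |f xh| + 1 ≤ τ₂ * η := by
    calc m 1 + |f xh| + 1 = ((m 1 + |f xh| + 1) / η) * η := by field_simp
    _ ≤ τ₂ * η := by nlinarith [hτ₂div]
  have hmτ₂ : m 1 < m τ₂ := by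
    have h1 := hmlb τ₂ hτ₂pos
    have h2 : -|f xh| ≤ f xh := neg_abs_le _
    linarith
  have hmτ₁ : m 1 < m τ₁ := by
    have h1 := hmlb' τ₁ hτ₁pos
    have h2 : τ₁⁻¹ = τ₂ := by rw [hτ₁def, inv_inv]
    rw [h2] at h1
    have h3 : -|f xh| ≤ f xh := neg_abs_le _
    linarith
  -- continuity of m on the interval
  set C : ℝ := Gmax + Kmax / (τ₁ * τ₁) with hCdef
  clear_value C
  have hCpos : 0 < C := by
    rw [hCdef]
    have h0 : 0 < Kmax / (τ₁ * τ₁) := div_pos hKmaxpos (mul_pos hτ₁pos hτ₁pos)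
    linarith
  have key : ∀ a ∈ Icc τ₁ τ₂, ∀ b ∈ Icc τ₁ τ₂, m a ≤ m b + C * |a - b| := by
    intro a ha b hb
    have ha0 : 0 < a := lt_of_lt_of_le hτ₁pos ha.1
    have hb0 : 0 < b := lt_of_lt_of_le hτ₁pos hb.1
    apply csSup_le (hSne.image _)
    rintro _ ⟨x, hx, rfl⟩
    have hgx : 0 < g x := lt_of_lt_of_le hη (hgpos x hx)
    have hhx : 0 < h x := lt_of_lt_of_le hη (hhpos x hx)
    have e1 : ψ a x = ψ b x + (a - b) * g x + (a⁻¹ - b⁻¹) * h x := by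
      simp only [hψdef]; ring
    have e2 : a⁻¹ - b⁻¹ = (b - a) / (a * b) := by field_simp
    have e3 : |a⁻¹ - b⁻¹| ≤ |a - b| / (τ₁ * τ₁) := by
      rw [e2, abs_div, abs_of_pos (mul_pos ha0 hb0), abs_sub_comm]
      have hab2 : τ₁ * τ₁ ≤ a * b := mul_le_mul ha.1 hb.1 hτ₁pos.le ha0.le
      exact div_le_div_of_nonneg_left (abs_nonneg _) (mul_pos hτ₁pos hτ₁pos) hab2
    have b1 : (a - b) * g x ≤ |a - b| * Gmax :=
      le_trans (mul_le_mul_of_nonneg_right (le_abs_self _) hgx.le)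
        (mul_le_mul_of_nonneg_left (hGmax x hx) (abs_nonneg _))
    have b2 : (a⁻¹ - b⁻¹) * h x ≤ (|a - b| / (τ₁ * τ₁)) * Kmax :=
      le_trans (mul_le_mul_of_nonneg_right (le_abs_self _) hhx.le)
        (le_trans (mul_le_mul_of_nonneg_right e3 hhx.le)
          (mul_le_mul_of_nonneg_left (hKmax x hx)
            (div_nonneg (abs_nonneg _) (mul_pos hτ₁pos hτ₁pos).le)))
    have hψb := hle b x hx
    rw [e1]
    have hCe : C * |a - b| = |a - b| * Gmax + |a - b| / (τ₁ * τ₁) * Kmax := by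
      rw [hCdef]; ring
    calc ψ b x + (a - b) * g x + (a⁻¹ - b⁻¹) * h x
        ≤ m b + |a - b| * Gmax + |a - b| / (τ₁ * τ₁) * Kmax :=
          add_le_add (add_le_add hψb b1) b2
      _ = m b + C * |a - b| := by rw [hCe]; ring
  have hmc : ContinuousOn m (Icc τ₁ τ₂) := by
    rw [Metric.continuousOn_iff]
    intro b hb ε hε
    refine ⟨ε / (C + 1), by positivity, fun a ha hab => ?_⟩
    have h1 := key a ha b hb
    have h2 := key b hb a ha
    rw [Real.dist_eq] at hab ⊢
    have h3 : |m a - m b| ≤ C * |a - b| := by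
      rw [abs_sub_le_iff]
      constructor
      · linarith
      · rw [abs_sub_comm]; linarith
    have h5 : C * |a - b| ≤ C * (ε / (C + 1)) := mul_le_mul_of_nonneg_left hab.le hCpos.le
    have h6 : C * (ε / (C + 1)) < ε := by
      rw [mul_div_assoc', div_lt_iff₀ (by linarith : (0:ℝ) < C + 1)]
      nlinarith
    linarith [abs_nonneg (m a - m b)]
  -- minimum over the interval
  obtain ⟨τs, hτsmem, hτsmin'⟩ := isCompact_Icc.exists_isMinOn ⟨1, h1mem⟩ hmc
  have hmin : ∀ τ ∈ Icc τ₁ τ₂, m τs ≤ m τ := fun τ hτ => hτsmin' hτ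
  have hτs0 : 0 < τs := lt_of_lt_of_le hτ₁pos hτsmem.1
  have hτs1 : τ₁ < τs := by
    rcases lt_or_eq_of_le hτsmem.1 with hlt | heq
    · exact hlt
    · exfalso; have h := hmin 1 h1mem; rw [← heq] at h; linarith
  have hτs2 : τs < τ₂ := by
    rcases lt_or_eq_of_le hτsmem.2 with hlt | heq
    · exact hlt
    · exfalso; have h := hmin 1 h1mem; rw [heq] at h; linarith
  -- the two approximating sequences
  set aseq : ℕ → ℝ := fun n => τs + (τ₂ - τs) * (1 / ((n : ℝ) + 1)) with hadef
  set bseq : ℕ → ℝ := fun n => τs - (τs - τ₁) * (1 / ((n : ℝ) + 1)) with hbdef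
  have hfrac : ∀ n : ℕ, 0 < 1 / ((n : ℝ) + 1) ∧ 1 / ((n : ℝ) + 1) ≤ 1 := by
    intro n
    constructor
    · positivity
    · rw [div_le_one (by positivity)]
      linarith [Nat.cast_nonneg (α := ℝ) n]
  have hamem : ∀ n, aseq n ∈ Icc τ₁ τ₂ := by
    intro n
    obtain ⟨hp, hl⟩ := hfrac n
    have h1 : 0 < (τ₂ - τs) * (1 / ((n : ℝ) + 1)) := mul_pos (by linarith) hp
    have h2 : (τ₂ - τs) * (1 / ((n : ℝ) + 1)) ≤ (τ₂ - τs) * 1 := by nlinarith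
    exact ⟨by show τ₁ ≤ τs + _; linarith, by show τs + _ ≤ τ₂; linarith⟩
  have hbmem : ∀ n, bseq n ∈ Icc τ₁ τ₂ := by
    intro n
    obtain ⟨hp, hl⟩ := hfrac n
    have h1 : 0 < (τs - τ₁) * (1 / ((n : ℝ) + 1)) := mul_pos (by linarith) hp
    have h2 : (τs - τ₁) * (1 / ((n : ℝ) + 1)) ≤ (τs - τ₁) * 1 := by nlinarith
    exact ⟨by show τ₁ ≤ τs - _; linarith, by show τs - _ ≤ τ₂; linarith⟩
  have had : ∀ n, 0 < (aseq n - τs) * 1 := by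
    intro n
    obtain ⟨hp, _⟩ := hfrac n
    have h1 : 0 < (τ₂ - τs) * (1 / ((n : ℝ) + 1)) := mul_pos (by linarith) hp
    show 0 < (τs + (τ₂ - τs) * (1 / ((n : ℝ) + 1)) - τs) * 1
    linarith
  have hbd : ∀ n, 0 < (bseq n - τs) * (-1) := by
    intro n
    obtain ⟨hp, _⟩ := hfrac n
    have h1 : 0 < (τs - τ₁) * (1 / ((n : ℝ) + 1)) := mul_pos (by linarith) hp
    show 0 < (τs - (τs - τ₁) * (1 / ((n : ℝ) + 1)) - τs) * (-1)
    nlinarith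
  have htends : Tendsto (fun n : ℕ => 1 / ((n : ℝ) + 1)) atTop (𝓝 0) :=
    tendsto_one_div_add_atTop_nhds_zero_nat
  have hat : Tendsto aseq atTop (𝓝 τs) := by
    have h1 : Tendsto (fun n : ℕ => τs + (τ₂ - τs) * (1 / ((n : ℝ) + 1))) atTop
        (𝓝 (τs + (τ₂ - τs) * 0)) := tendsto_const_nhds.add (tendsto_const_nhds.mul htends)
    rw [mul_zero, add_zero] at h1
    exact h1
  have hbt : Tendsto bseq atTop (𝓝 τs) := by
    have h1 : Tendsto (fun n : ℕ => τs - (τs - τ₁) * (1 / ((n : ℝ) + 1))) atTop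
        (𝓝 (τs - (τs - τ₁) * 0)) := tendsto_const_nhds.sub (tendsto_const_nhds.mul htends)
    rw [mul_zero, sub_zero] at h1
    exact h1
  have hle' : ∀ τ, ∀ x ∈ S, f x + τ * g x + τ⁻¹ * h x ≤ m τ := fun τ x hx => hle τ x hx
  have hax : ∀ n, ∃ x ∈ S, f x + aseq n * g x + (aseq n)⁻¹ * h x = m (aseq n) := by
    intro n
    obtain ⟨x, hxS, he⟩ := hmem (aseq n)
    exact ⟨x, hxS, he⟩
  have hbx : ∀ n, ∃ x ∈ S, f x + bseq n * g x + (bseq n)⁻¹ * h x = m (bseq n) := by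
    intro n
    obtain ⟨x, hxS, he⟩ := hmem (bseq n)
    exact ⟨x, hxS, he⟩
  obtain ⟨xp, hxpS, hxpeq, hxpsign⟩ := petersen_aux hScomp hfc hgc hhc hτ₁pos hτsmem
    (by norm_num : (1:ℝ) * 1 = 1) hle' hmin hamem had hat hax
  obtain ⟨xm, hxmS, hxmeq, hxmsign⟩ := petersen_aux hScomp hfc hgc hhc hτ₁pos hτsmem
    (by norm_num : (-1:ℝ) * (-1) = 1) hle' hmin hbmem hbd hbt hbx
  -- the matrix P and its kernel
  set P : Matrix (Fin k) (Fin k) ℝ :=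
    m τs • (1 : Matrix (Fin k) (Fin k) ℝ) - (Q + τs • G + τs⁻¹ • K) with hPdef
  have hPs : Pᵀ = P := by
    rw [hPdef]
    simp [transpose_sub, transpose_add, transpose_smul, transpose_one, hQs, hGs, hKs]
  have quadP : ∀ z, z ⬝ᵥ P *ᵥ z = m τs * (z ⬝ᵥ z) - (f z + τs * g z + τs⁻¹ * h z) := by
    intro z
    rw [hPdef]
    simp only [sub_mulVec, add_mulVec, smul_mulVec, dotProduct_sub, dotProduct_add,
      dotProduct_smul, smul_eq_mul, one_mulVec, hfdef, hgdef, hhdef]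
    try ring
  have hpsd : ∀ z, 0 ≤ z ⬝ᵥ P *ᵥ z := by
    intro z
    rcases eq_or_ne z 0 with rfl | hz
    · simp
    · have hc : 0 < z ⬝ᵥ z := dot_self_pos hz
      have huu : ((Real.sqrt (z ⬝ᵥ z))⁻¹ • z) ⬝ᵥ ((Real.sqrt (z ⬝ᵥ z))⁻¹ • z) = 1 :=
        unit_of_ne_zero hz
      have huS : ((Real.sqrt (z ⬝ᵥ z))⁻¹ • z) ∈ S := huu
      have h1 : f ((Real.sqrt (z ⬝ᵥ z))⁻¹ • z) + τs * g ((Real.sqrt (z ⬝ᵥ z))⁻¹ • z)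
          + τs⁻¹ * h ((Real.sqrt (z ⬝ᵥ z))⁻¹ • z) ≤ m τs := hle τs _ huS
      have h2 := quadP ((Real.sqrt (z ⬝ᵥ z))⁻¹ • z)
      have h3 : 0 ≤ ((Real.sqrt (z ⬝ᵥ z))⁻¹ • z) ⬝ᵥ P *ᵥ ((Real.sqrt (z ⬝ᵥ z))⁻¹ • z) := by
        rw [h2, huu, mul_one]; linarith
      have h4 := quad_smul' P (Real.sqrt (z ⬝ᵥ z))⁻¹ z
      have h5 : (Real.sqrt (z ⬝ᵥ z))⁻¹ * (Real.sqrt (z ⬝ᵥ z))⁻¹ = (z ⬝ᵥ z)⁻¹ := by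
        rw [← mul_inv, Real.mul_self_sqrt hc.le]
      rw [h4, h5] at h3
      have h6 : z ⬝ᵥ P *ᵥ z = (z ⬝ᵥ z) * ((z ⬝ᵥ z)⁻¹ * (z ⬝ᵥ P *ᵥ z)) := by
        field_simp
      rw [h6]
      exact mul_nonneg hc.le h3
  have hq0 : ∀ x, x ∈ S → f x + τs * g x + τs⁻¹ * h x = m τs → P *ᵥ x = 0 := by
    intro x hxS hxe
    apply ker_psd P hPs hpsd
    have hx1 : x ⬝ᵥ x = 1 := hxS
    rw [quadP x, hxe, hx1]; ring
  have hkerp : P *ᵥ xp = 0 := hq0 xp hxpS hxpeq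
  have hkerm : P *ᵥ xm = 0 := hq0 xm hxmS hxmeq
  -- find the balanced maximizer
  have hmain : ∃ x, x ∈ S ∧ (f x + τs * g x + τs⁻¹ * h x = m τs) ∧ τs ^ 2 * g x = h x := by
    by_cases hcase : xm = xp ∨ xm = -xp
    · refine ⟨xp, hxpS, hxpeq, ?_⟩
      rcases hcase with heq | heq
      · rw [heq] at hxmsign; linarith
      · rw [heq] at hxmsign
        have e1 : g (-xp) = g xp := quad_neg G xp
        have e2 : h (-xp) = h xp := quad_neg K xp
        rw [e1, e2] at hxmsign
        linarith
    · push_neg at hcase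
      obtain ⟨hne1, hne2⟩ := hcase
      set zc : ℝ → (Fin k → ℝ) := fun θ => Real.cos θ • xp + Real.sin θ • xm with hzdef
      have hznz : ∀ θ ∈ Icc (0:ℝ) (Real.pi/2), zc θ ≠ 0 := by
        intro θ hθ h0
        have hpi := Real.pi_pos
        have hcos : 0 ≤ Real.cos θ := Real.cos_nonneg_of_mem_Icc
          ⟨by linarith [hθ.1], hθ.2⟩
        have hsin : 0 ≤ Real.sin θ := Real.sin_nonneg_of_nonneg_of_le_pi hθ.1
          (by linarith [hθ.2])
        have h0' : Real.cos θ • xp + Real.sin θ • xm = 0 := h0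
        have he : Real.cos θ • xp = -(Real.sin θ • xm) := by
          rwa [add_eq_zero_iff_eq_neg] at h0'
        have hdd := congrArg (fun v => v ⬝ᵥ v) he
        simp only [dot_smul_smul, neg_dotProduct, dotProduct_neg, neg_neg] at hdd
        have hxp1 : xp ⬝ᵥ xp = 1 := hxpS
        have hxm1 : xm ⬝ᵥ xm = 1 := hxmS
        rw [hxp1, hxm1] at hdd
        have hpyth := Real.sin_sq_add_cos_sq θ
        have hcs : Real.cos θ = Real.sin θ := by nlinarith
        have hc2 : Real.cos θ * Real.cos θ = 1/2 := by nlinarith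
        rw [← hcs] at h0'
        rw [← smul_add] at h0'
        rcases smul_eq_zero.mp h0' with hc0 | hsum
        · rw [hc0] at hc2; norm_num at hc2
        · exact hne2 (eq_neg_of_add_eq_zero_right hsum)
      have hcontz : Continuous zc :=
        (Real.continuous_cos.smul continuous_const).add (Real.continuous_sin.smul continuous_const)
      have hqpos : ∀ θ ∈ Icc (0:ℝ) (Real.pi/2), 0 < zc θ ⬝ᵥ zc θ :=
        fun θ hθ => dot_self_pos (hznz θ hθ)
      set uc : ℝ → (Fin k → ℝ) := fun θ => (Real.sqrt (zc θ ⬝ᵥ zc θ))⁻¹ • zc θ with hudef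
      have hucS : ∀ θ ∈ Icc (0:ℝ) (Real.pi/2), uc θ ⬝ᵥ uc θ = 1 :=
        fun θ hθ => unit_of_ne_zero (hznz θ hθ)
      have hcontq : Continuous fun θ => zc θ ⬝ᵥ zc θ := cont_dot.comp hcontz
      have hcontu : ContinuousOn uc (Icc (0:ℝ) (Real.pi/2)) := by
        refine ContinuousOn.smul (f := fun θ => (Real.sqrt (zc θ ⬝ᵥ zc θ))⁻¹) (g := zc) ?_ ?_
        · exact ((Real.continuous_sqrt.comp hcontq).continuousOn).inv₀
            (fun θ hθ => (Real.sqrt_pos.mpr (hqpos θ hθ)).ne')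
        · exact hcontz.continuousOn
      set Φ : ℝ → ℝ := fun θ => τs ^ 2 * g (uc θ) - h (uc θ) with hΦdef
      have hcontΦ : ContinuousOn Φ (Icc (0:ℝ) (Real.pi/2)) :=
        (continuousOn_const.mul (hgc.comp_continuousOn hcontu)).sub
          (hhc.comp_continuousOn hcontu)
      have hz0 : zc 0 = xp := by
        show Real.cos 0 • xp + Real.sin 0 • xm = xp
        simp
      have hu0 : uc 0 = xp := by
        show (Real.sqrt (zc 0 ⬝ᵥ zc 0))⁻¹ • zc 0 = xp
        have hxp1 : xp ⬝ᵥ xp = 1 := hxpS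
        rw [hz0, hxp1, Real.sqrt_one, inv_one, one_smul]
      have hzpi : zc (Real.pi/2) = xm := by
        show Real.cos (Real.pi/2) • xp + Real.sin (Real.pi/2) • xm = xm
        rw [Real.cos_pi_div_two, Real.sin_pi_div_two, zero_smul, one_smul, zero_add]
      have hupi : uc (Real.pi/2) = xm := by
        show (Real.sqrt (zc (Real.pi/2) ⬝ᵥ zc (Real.pi/2)))⁻¹ • zc (Real.pi/2) = xm
        have hxm1 : xm ⬝ᵥ xm = 1 := hxmS
        rw [hzpi, hxm1, Real.sqrt_one, inv_one, one_smul]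
      have hΦ0 : 0 ≤ Φ 0 := by
        show 0 ≤ τs ^ 2 * g (uc 0) - h (uc 0)
        rw [hu0]; linarith
      have hΦpi : Φ (Real.pi/2) ≤ 0 := by
        show τs ^ 2 * g (uc (Real.pi/2)) - h (uc (Real.pi/2)) ≤ 0
        rw [hupi]; linarith
      have hpi2 : (0:ℝ) ≤ Real.pi/2 := by positivity
      obtain ⟨θ0, hθ0mem, hθ0⟩ := intermediate_value_Icc' hpi2 hcontΦ ⟨hΦpi, hΦ0⟩
      have hPz : P *ᵥ zc θ0 = 0 := by
        show P *ᵥ (Real.cos θ0 • xp + Real.sin θ0 • xm) = 0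
        rw [mulVec_add, mulVec_smul, mulVec_smul, hkerp, hkerm, smul_zero, smul_zero, add_zero]
      have hPu : P *ᵥ uc θ0 = 0 := by
        show P *ᵥ ((Real.sqrt (zc θ0 ⬝ᵥ zc θ0))⁻¹ • zc θ0) = 0
        rw [mulVec_smul, hPz, smul_zero]
      have hquc : uc θ0 ⬝ᵥ P *ᵥ uc θ0 = 0 := by rw [hPu, dotProduct_zero]
      have hu1 : uc θ0 ⬝ᵥ uc θ0 = 1 := hucS θ0 hθ0mem
      have hψu : f (uc θ0) + τs * g (uc θ0) + τs⁻¹ * h (uc θ0) = m τs := by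
        have hqq := quadP (uc θ0)
        rw [hquc, hu1, mul_one] at hqq
        linarith
      have hgh : τs ^ 2 * g (uc θ0) = h (uc θ0) := by
        have : τs ^ 2 * g (uc θ0) - h (uc θ0) = 0 := hθ0
        linarith
      exact ⟨uc θ0, hucS θ0 hθ0mem, hψu, hgh⟩
  -- conclusion
  obtain ⟨xs, hxsS, hxse, hxgh⟩ := hmain
  have hgxs : η ≤ g xs := hgpos xs hxsS
  have hgxs0 : 0 ≤ τs * g xs := mul_nonneg hτs0.le (by linarith)
  have hsqrt : Real.sqrt (g xs * h xs) = τs * g xs := by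
    rw [← hxgh, show g xs * (τs ^ 2 * g xs) = (τs * g xs) ^ 2 from by ring,
      Real.sqrt_sq hgxs0]
  have hinvh : τs⁻¹ * h xs = τs * g xs := by
    rw [← hxgh]; field_simp
  have hxs1 : xs ⬝ᵥ xs = 1 := hxsS
  have hptxs : f xs + 2 * Real.sqrt (g xs * h xs) < 0 := hpt xs hxs1
  have hmneg : m τs < 0 := by
    rw [← hxse, hinvh, hsqrt] at *
    linarith
  exact ⟨τs, hτs0, fun x hx => lt_of_le_of_lt (hle' τs x hx) hmneg⟩


lemma sqrt_add_le' (a b : ℝ) (ha : 0 ≤ a) (hb : 0 ≤ b) :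
    Real.sqrt (a + b) ≤ Real.sqrt a + Real.sqrt b := by
  have h1 : a + b ≤ (Real.sqrt a + Real.sqrt b) ^ 2 := by
    have e1 := Real.sq_sqrt ha
    have e2 := Real.sq_sqrt hb
    nlinarith [Real.sqrt_nonneg a, Real.sqrt_nonneg b]
  calc Real.sqrt (a + b) ≤ Real.sqrt ((Real.sqrt a + Real.sqrt b) ^ 2) := Real.sqrt_le_sqrt h1
  _ = _ := Real.sqrt_sq (by positivity)

lemma quad_decomp {k : ℕ} (Q A B : Matrix (Fin k) (Fin k) ℝ) (c d : ℝ) (x : Fin k → ℝ) :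
    x ⬝ᵥ (Q + c • A + d • B) *ᵥ x
      = x ⬝ᵥ Q *ᵥ x + c * (x ⬝ᵥ A *ᵥ x) + d * (x ⬝ᵥ B *ᵥ x) := by
  simp [add_mulVec, smul_mulVec, dotProduct_add, dotProduct_smul]

lemma sphere_to_all' {k : ℕ} (M : Matrix (Fin k) (Fin k) ℝ)
    (hs : ∀ x : Fin k → ℝ, x ⬝ᵥ x = 1 → x ⬝ᵥ M *ᵥ x < 0) :
    ∀ x : Fin k → ℝ, x ≠ 0 → x ⬝ᵥ M *ᵥ x < 0 := by
  intro x hx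
  have hc : 0 < x ⬝ᵥ x := dot_self_pos hx
  have hu := hs _ (unit_of_ne_zero hx)
  rw [quad_smul'] at hu
  have h5 : (Real.sqrt (x ⬝ᵥ x))⁻¹ * (Real.sqrt (x ⬝ᵥ x))⁻¹ = (x ⬝ᵥ x)⁻¹ := by
    rw [← mul_inv, Real.mul_self_sqrt hc.le]
  rw [h5] at hu
  have h6 : x ⬝ᵥ M *ᵥ x = (x ⬝ᵥ x) * ((x ⬝ᵥ x)⁻¹ * (x ⬝ᵥ M *ᵥ x)) := by field_simp
  rw [h6]
  exact mul_neg_of_pos_of_neg hc hu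

lemma petersen_perturb {k : ℕ} (hk : 0 < k) (Q G K : Matrix (Fin k) (Fin k) ℝ)
    (hQs : Qᵀ = Q) (hGs : Gᵀ = G) (hKs : Kᵀ = K)
    (hGpsd : ∀ x, 0 ≤ x ⬝ᵥ G *ᵥ x) (hKpsd : ∀ x, 0 ≤ x ⬝ᵥ K *ᵥ x)
    (hpt : ∀ x : Fin k → ℝ, x ⬝ᵥ x = 1 →
      x ⬝ᵥ Q *ᵥ x + 2 * Real.sqrt ((x ⬝ᵥ G *ᵥ x) * (x ⬝ᵥ K *ᵥ x)) < 0) :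
    ∃ τ : ℝ, 0 < τ ∧ ∀ x : Fin k → ℝ, x ⬝ᵥ x = 1 →
      x ⬝ᵥ Q *ᵥ x + τ * (x ⬝ᵥ G *ᵥ x) + τ⁻¹ * (x ⬝ᵥ K *ᵥ x) < 0 := by
  classical
  set f : (Fin k → ℝ) → ℝ := fun x => x ⬝ᵥ Q *ᵥ x with hfdef
  set g : (Fin k → ℝ) → ℝ := fun x => x ⬝ᵥ G *ᵥ x with hgdef
  set h : (Fin k → ℝ) → ℝ := fun x => x ⬝ᵥ K *ᵥ x with hhdef
  set S : Set (Fin k → ℝ) := {x | x ⬝ᵥ x = 1} with hSdef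
  have hSclosed : IsClosed S := isClosed_eq cont_dot continuous_const
  have hSsub : S ⊆ Metric.closedBall 0 1 := by
    intro x hx
    rw [Metric.mem_closedBall, dist_zero_right, pi_norm_le_iff_of_nonneg zero_le_one]
    intro i
    rw [Real.norm_eq_abs, abs_le_one_iff_mul_self_le_one]
    have h1 : x i * x i ≤ x ⬝ᵥ x :=
      Finset.single_le_sum (f := fun j => x j * x j) (fun j _ => mul_self_nonneg _)
        (Finset.mem_univ i)
    have h2 : x ⬝ᵥ x = 1 := hx
    linarith
  have hScomp : IsCompact S :=
    (isCompact_closedBall (0 : Fin k → ℝ) 1).of_isClosed_subset hSclosed hSsub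
  have hxhS : (Pi.single (⟨0, hk⟩ : Fin k) (1 : ℝ)) ∈ S := by
    show _ ⬝ᵥ _ = 1
    simp [dotProduct, Pi.single_apply]
  have hSne : S.Nonempty := ⟨_, hxhS⟩
  -- max of T, g, h on S
  have hTc : Continuous fun x => f x + 2 * Real.sqrt (g x * h x) :=
    (cont_quad Q).add (continuous_const.mul (Real.continuous_sqrt.comp
      ((cont_quad G).mul (cont_quad K))))
  obtain ⟨x0, hx0S, hx0max⟩ := hScomp.exists_isMaxOn hSne hTc.continuousOn
  set M0 : ℝ := f x0 + 2 * Real.sqrt (g x0 * h x0) with hM0def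
  have hM0neg : M0 < 0 := hpt x0 hx0S
  have hM0max : ∀ x ∈ S, f x + 2 * Real.sqrt (g x * h x) ≤ M0 := fun x hx => hx0max hx
  clear_value M0
  obtain ⟨xG, hxGS, hxGmax⟩ := hScomp.exists_isMaxOn hSne (cont_quad G).continuousOn
  obtain ⟨xK, hxKS, hxKmax⟩ := hScomp.exists_isMaxOn hSne (cont_quad K).continuousOn
  set Gmax : ℝ := g xG with hGmaxdef
  set Kmax : ℝ := h xK with hKmaxdef
  have hGmax : ∀ x ∈ S, g x ≤ Gmax := fun x hx => hxGmax hx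
  have hKmax : ∀ x ∈ S, h x ≤ Kmax := fun x hx => hxKmax hx
  have hGmax0 : 0 ≤ Gmax := hGpsd xG
  have hKmax0 : 0 ≤ Kmax := hKpsd xK
  clear_value Gmax Kmax
  set B : ℝ := Gmax + Kmax + 1 with hBdef
  have hB0 : 0 < B := by rw [hBdef]; linarith
  clear_value B
  have hM0sq : 0 < M0 ^ 2 := by nlinarith [hM0neg]
  set η : ℝ := min 1 (M0 ^ 2 / (8 * B)) with hηdef
  have hη : 0 < η := lt_min one_pos (div_pos hM0sq (by linarith))
  have hη1 : η ≤ 1 := min_le_left _ _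
  have hη2 : η ≤ M0 ^ 2 / (8 * B) := min_le_right _ _
  clear_value η
  have hηB : η * B < M0 ^ 2 / 4 := by
    have h1 : η * B ≤ (M0 ^ 2 / (8 * B)) * B := mul_le_mul_of_nonneg_right hη2 hB0.le
    have h2 : (M0 ^ 2 / (8 * B)) * B = M0 ^ 2 / 8 := by
      field_simp
    nlinarith
  -- perturbed matrices
  set G' : Matrix (Fin k) (Fin k) ℝ := G + η • (1 : Matrix (Fin k) (Fin k) ℝ) with hG'def
  set K' : Matrix (Fin k) (Fin k) ℝ := K + η • (1 : Matrix (Fin k) (Fin k) ℝ) with hK'def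
  have hG's : G'ᵀ = G' := by rw [hG'def]; simp [transpose_add, transpose_smul, hGs]
  have hK's : K'ᵀ = K' := by rw [hK'def]; simp [transpose_add, transpose_smul, hKs]
  have quadG' : ∀ x, x ⬝ᵥ G' *ᵥ x = g x + η * (x ⬝ᵥ x) := by
    intro x
    rw [hG'def]
    simp [add_mulVec, smul_mulVec, dotProduct_add, dotProduct_smul, one_mulVec, hgdef]
  have quadK' : ∀ x, x ⬝ᵥ K' *ᵥ x = h x + η * (x ⬝ᵥ x) := by
    intro x
    rw [hK'def]
    simp [add_mulVec, smul_mulVec, dotProduct_add, dotProduct_smul, one_mulVec, hhdef]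
  have hG'lb : ∀ x, η * (x ⬝ᵥ x) ≤ x ⬝ᵥ G' *ᵥ x := by
    intro x; rw [quadG' x]; linarith [hGpsd x]
  have hK'lb : ∀ x, η * (x ⬝ᵥ x) ≤ x ⬝ᵥ K' *ᵥ x := by
    intro x; rw [quadK' x]; linarith [hKpsd x]
  have hpt' : ∀ x : Fin k → ℝ, x ⬝ᵥ x = 1 →
      x ⬝ᵥ Q *ᵥ x + 2 * Real.sqrt ((x ⬝ᵥ G' *ᵥ x) * (x ⬝ᵥ K' *ᵥ x)) < 0 := by
    intro x hx1
    have hxS : x ∈ S := hx1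
    rw [quadG' x, quadK' x, hx1, mul_one]
    have hgx : 0 ≤ g x := hGpsd x
    have hhx : 0 ≤ h x := hKpsd x
    have e1 : (g x + η) * (h x + η) = g x * h x + (η * (g x + h x + η)) := by ring
    have e2 : η * (g x + h x + η) ≤ η * B := by
      have := hGmax x hxS
      have := hKmax x hxS
      nlinarith
    have e3 : Real.sqrt ((g x + η) * (h x + η))
        ≤ Real.sqrt (g x * h x) + Real.sqrt (η * B) := by
      calc Real.sqrt ((g x + η) * (h x + η))
          ≤ Real.sqrt (g x * h x + η * B) := by
            apply Real.sqrt_le_sqrt; rw [e1]; linarith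
        _ ≤ Real.sqrt (g x * h x) + Real.sqrt (η * B) :=
            sqrt_add_le' _ _ (by positivity) (by positivity)
    have e4 : Real.sqrt (η * B) < -M0 / 2 := by
      rw [Real.sqrt_lt' (by linarith)]
      nlinarith
    have e5 := hM0max x hxS
    have : f x = x ⬝ᵥ Q *ᵥ x := rfl
    linarith
  obtain ⟨τ, hτ0, hτ⟩ := petersen_core_s5 hk Q G' K' hQs hG's hK's hη hG'lb hK'lb hpt'
  refine ⟨τ, hτ0, fun x hx1 => ?_⟩
  have h1 := hτ x hx1
  rw [quadG' x, quadK' x, hx1, mul_one] at h1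
  have h2 : τ * (x ⬝ᵥ G *ᵥ x) ≤ τ * (x ⬝ᵥ G *ᵥ x + η) := by nlinarith
  have h3 : τ⁻¹ * (x ⬝ᵥ K *ᵥ x) ≤ τ⁻¹ * (x ⬝ᵥ K *ᵥ x + η) := by
    have : 0 < τ⁻¹ := inv_pos.mpr hτ0
    nlinarith
  have hgg : g x = x ⬝ᵥ G *ᵥ x := rfl
  have hhh : h x = x ⬝ᵥ K *ᵥ x := rfl
  rw [hgg, hhh] at h1
  linarith

lemma pointwise_of_forall {k r s : ℕ}
    (Q : Matrix (Fin k) (Fin k) ℝ)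
    (H : Matrix (Fin k) (Fin r) ℝ) (E : Matrix (Fin s) (Fin k) ℝ)
    (R : Matrix (Fin s) (Fin s) ℝ) (hRsymm : R.IsSymm) (hR : R.PosDef)
    (hF : ∀ F : Matrix (Fin r) (Fin s) ℝ, (R - Fᵀ * F).PosSemidef →
        NegDef (Q + H * F * E + Eᵀ * Fᵀ * Hᵀ))
    (x : Fin k → ℝ) (hx : x ≠ 0) :
    x ⬝ᵥ Q *ᵥ x + 2 * Real.sqrt ((x ⬝ᵥ (H * Hᵀ) *ᵥ x) * (x ⬝ᵥ (Eᵀ * R * E) *ᵥ x)) < 0 := by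
  classical
  have hRs : Rᵀ = R := hRsymm
  have hRpsd : ∀ y, 0 ≤ y ⬝ᵥ R *ᵥ y := fun y => by simpa using hR.posSemidef.dotProduct_mulVec_nonneg y
  set a : Fin r → ℝ := Hᵀ *ᵥ x with hadef
  set b : Fin s → ℝ := E *ᵥ x with hbdef
  have hga : x ⬝ᵥ (H * Hᵀ) *ᵥ x = a ⬝ᵥ a := quad_mul H Hᵀ x
  have hhb : x ⬝ᵥ (Eᵀ * R * E) *ᵥ x = b ⬝ᵥ R *ᵥ b := by
    have h1 := quad_sandwich Eᵀ R E x
    rwa [transpose_transpose] at h1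
  -- the value with F = 0
  have hzero : x ⬝ᵥ Q *ᵥ x < 0 := by
    have hc : (R - (0 : Matrix (Fin r) (Fin s) ℝ)ᵀ * (0 : Matrix (Fin r) (Fin s) ℝ)).PosSemidef := by
      simpa [Matrix.zero_mul] using hR.posSemidef
    have hneg := hF 0 hc x hx
    simpa [Matrix.mul_zero, Matrix.zero_mul] using hneg
  by_cases hb0 : b ⬝ᵥ R *ᵥ b = 0
  · rw [hhb, hb0, mul_zero, Real.sqrt_zero, mul_zero, add_zero]
    exact hzero
  by_cases ha0 : a ⬝ᵥ a = 0
  · rw [hga, ha0, zero_mul, Real.sqrt_zero, mul_zero, add_zero]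
    exact hzero
  have hβ : 0 < b ⬝ᵥ R *ᵥ b := lt_of_le_of_ne (hRpsd b) (Ne.symm hb0)
  have hα : 0 < a ⬝ᵥ a := lt_of_le_of_ne (dot_self_nonneg a) (Ne.symm ha0)
  set α : ℝ := a ⬝ᵥ a with hαdef
  set β : ℝ := b ⬝ᵥ R *ᵥ b with hβdef
  have hsα : 0 < Real.sqrt α := Real.sqrt_pos.mpr hα
  have hsβ : 0 < Real.sqrt β := Real.sqrt_pos.mpr hβ
  have hsα2 : Real.sqrt α * Real.sqrt α = α := Real.mul_self_sqrt hα.le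
  have hsβ2 : Real.sqrt β * Real.sqrt β = β := Real.mul_self_sqrt hβ.le
  set c : ℝ := (Real.sqrt α * Real.sqrt β)⁻¹ with hcdef
  set F : Matrix (Fin r) (Fin s) ℝ := c • vecMulVec a (R *ᵥ b) with hFdef
  have hFy : ∀ y, F *ᵥ y = (c * ((R *ᵥ b) ⬝ᵥ y)) • a := by
    intro y
    rw [hFdef, smul_mulVec, my_vecMulVec_mulVec, smul_smul]
  -- the constraint
  have hherm : (R - Fᵀ * F).IsHermitian := by
    rw [Matrix.IsHermitian, conjTranspose_eq_transpose_of_trivial, transpose_sub, hRs,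
      transpose_mul, transpose_transpose]
  have hquad : ∀ y, 0 ≤ y ⬝ᵥ (R - Fᵀ * F) *ᵥ y := by
    intro y
    rw [sub_mulVec, dotProduct_sub]
    have h1 : y ⬝ᵥ (Fᵀ * F) *ᵥ y = (F *ᵥ y) ⬝ᵥ (F *ᵥ y) := by
      have := quad_mul Fᵀ F y
      rwa [transpose_transpose] at this
    rw [h1, hFy y, dot_smul_smul]
    have hcs := cs_psd R hRs hRpsd y b
    have hwy : (R *ᵥ b) ⬝ᵥ y = y ⬝ᵥ R *ᵥ b := dotProduct_comm _ _
    have hc2 : c * c = (α * β)⁻¹ := by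
      rw [hcdef, ← mul_inv]
      congr 1
      linear_combination (Real.sqrt β * Real.sqrt β) * hsα2 + α * hsβ2
    have key : (c * ((R *ᵥ b) ⬝ᵥ y)) * (c * ((R *ᵥ b) ⬝ᵥ y)) * α ≤ y ⬝ᵥ R *ᵥ y := by
      have e1 : (c * ((R *ᵥ b) ⬝ᵥ y)) * (c * ((R *ᵥ b) ⬝ᵥ y)) * α
          = (y ⬝ᵥ R *ᵥ b) ^ 2 * ((α * β)⁻¹ * α) := by
        rw [hwy]; rw [show (c * (y ⬝ᵥ R *ᵥ b)) * (c * (y ⬝ᵥ R *ᵥ b)) * α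
          = (c * c) * ((y ⬝ᵥ R *ᵥ b) ^ 2) * α from by ring, hc2]; ring
      have e2 : (α * β)⁻¹ * α = β⁻¹ := by
        rw [mul_inv]; field_simp
      rw [e1, e2]
      rw [show (y ⬝ᵥ R *ᵥ b) ^ 2 * β⁻¹ = (y ⬝ᵥ R *ᵥ b) ^ 2 / β from by ring]
      rw [div_le_iff₀ hβ]
      calc (y ⬝ᵥ R *ᵥ b) ^ 2 ≤ (y ⬝ᵥ R *ᵥ y) * (b ⬝ᵥ R *ᵥ b) := hcs
      _ = (y ⬝ᵥ R *ᵥ y) * β := by rw [hβdef]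
    linarith
  have hcpsd : (R - Fᵀ * F).PosSemidef := .of_dotProduct_mulVec_nonneg hherm (fun y => by simpa using hquad y)
  -- evaluate
  have hneg := hF F hcpsd x hx
  have hexp : x ⬝ᵥ (Q + H * F * E + Eᵀ * Fᵀ * Hᵀ) *ᵥ x
      = x ⬝ᵥ Q *ᵥ x + 2 * (a ⬝ᵥ F *ᵥ b) := by
    rw [add_mulVec, add_mulVec, dotProduct_add, dotProduct_add]
    rw [quad_sandwich H F E x, quad_sandwich Eᵀ Fᵀ Hᵀ x, transpose_transpose]
    have h2 : b ⬝ᵥ Fᵀ *ᵥ a = a ⬝ᵥ F *ᵥ b := by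
      rw [dotProduct_mulVec, vecMul_transpose, dotProduct_comm]
    rw [h2]
    ring
  rw [hexp] at hneg
  have hFb : a ⬝ᵥ F *ᵥ b = Real.sqrt α * Real.sqrt β := by
    rw [hFy b, dotProduct_smul, smul_eq_mul]
    have hwb : (R *ᵥ b) ⬝ᵥ b = β := by
      rw [dotProduct_comm]
    rw [hwb, hcdef]
    rw [show (Real.sqrt α * Real.sqrt β)⁻¹ * β * (a ⬝ᵥ a)
        = (Real.sqrt α * Real.sqrt β)⁻¹ * (β * α) from by rw [hαdef]; ring]
    rw [inv_mul_eq_div, div_eq_iff (by positivity : Real.sqrt α * Real.sqrt β ≠ 0)]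
    linear_combination (-(Real.sqrt β * Real.sqrt β)) * hsα2 - α * hsβ2
  have hsqrt : Real.sqrt ((x ⬝ᵥ (H * Hᵀ) *ᵥ x) * (x ⬝ᵥ (Eᵀ * R * E) *ᵥ x))
      = Real.sqrt α * Real.sqrt β := by
    rw [hga, hhb, Real.sqrt_mul hα.le]
  rw [hsqrt, ← hFb]
  exact hneg

lemma petersen_backward {k r s : ℕ}
    (Q : Matrix (Fin k) (Fin k) ℝ)
    (H : Matrix (Fin k) (Fin r) ℝ) (E : Matrix (Fin s) (Fin k) ℝ)
    (R : Matrix (Fin s) (Fin s) ℝ) {ε : ℝ} (hε : 0 < ε)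
    (hneg : NegDef (Q + ε ^ 2 • (H * Hᵀ) + (ε ^ 2)⁻¹ • (Eᵀ * R * E)))
    (F : Matrix (Fin r) (Fin s) ℝ) (hFc : (R - Fᵀ * F).PosSemidef) :
    NegDef (Q + H * F * E + Eᵀ * Fᵀ * Hᵀ) := by
  intro x hx
  have h0 := hneg x hx
  rw [show (Q + ε ^ 2 • (H * Hᵀ) + (ε ^ 2)⁻¹ • (Eᵀ * R * E)).mulVec x
      = (Q + ε ^ 2 • (H * Hᵀ) + (ε ^ 2)⁻¹ • (Eᵀ * R * E)) *ᵥ x from rfl] at h0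
  rw [quad_decomp] at h0
  set a : Fin r → ℝ := Hᵀ *ᵥ x with hadef
  set b : Fin s → ℝ := E *ᵥ x with hbdef
  have hga : x ⬝ᵥ (H * Hᵀ) *ᵥ x = a ⬝ᵥ a := quad_mul H Hᵀ x
  have hhb : x ⬝ᵥ (Eᵀ * R * E) *ᵥ x = b ⬝ᵥ R *ᵥ b := by
    have h1 := quad_sandwich Eᵀ R E x
    rwa [transpose_transpose] at h1
  rw [hga, hhb] at h0
  set w : Fin r → ℝ := F *ᵥ b with hwdef
  -- AM-GM
  have hamgm : 2 * (a ⬝ᵥ w) ≤ ε ^ 2 * (a ⬝ᵥ a) + (ε ^ 2)⁻¹ * (w ⬝ᵥ w) := by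
    have hnn := dot_self_nonneg (ε • a - ε⁻¹ • w)
    have hexp : (ε • a - ε⁻¹ • w) ⬝ᵥ (ε • a - ε⁻¹ • w)
        = (ε * ε) * (a ⬝ᵥ a) - (ε * ε⁻¹) * (a ⬝ᵥ w) - (ε⁻¹ * ε) * (w ⬝ᵥ a)
          + (ε⁻¹ * ε⁻¹) * (w ⬝ᵥ w) := by
      rw [sub_dotProduct, dotProduct_sub, dotProduct_sub, dot_smul_smul, dot_smul_smul,
        dot_smul_smul, dot_smul_smul]
      ring
    have hee : ε * ε⁻¹ = 1 := mul_inv_cancel₀ hε.ne'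
    have hee' : ε⁻¹ * ε = 1 := inv_mul_cancel₀ hε.ne'
    have hwa : w ⬝ᵥ a = a ⬝ᵥ w := dotProduct_comm _ _
    rw [hexp, hee, hee', hwa, one_mul] at hnn
    have he2 : ε ^ 2 = ε * ε := sq ε
    have he2' : (ε ^ 2)⁻¹ = ε⁻¹ * ε⁻¹ := by rw [he2, mul_inv]
    rw [he2', he2]
    linarith
  -- constraint
  have hcon : w ⬝ᵥ w ≤ b ⬝ᵥ R *ᵥ b := by
    have h1 : 0 ≤ b ⬝ᵥ (R - Fᵀ * F) *ᵥ b := by simpa using hFc.dotProduct_mulVec_nonneg b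
    rw [sub_mulVec, dotProduct_sub] at h1
    have h2 : b ⬝ᵥ (Fᵀ * F) *ᵥ b = w ⬝ᵥ w := by
      have := quad_mul Fᵀ F b
      rwa [transpose_transpose] at this
    rw [h2] at h1
    linarith
  have hexp2 : x ⬝ᵥ (Q + H * F * E + Eᵀ * Fᵀ * Hᵀ) *ᵥ x
      = x ⬝ᵥ Q *ᵥ x + 2 * (a ⬝ᵥ w) := by
    rw [add_mulVec, add_mulVec, dotProduct_add, dotProduct_add]
    rw [quad_sandwich H F E x, quad_sandwich Eᵀ Fᵀ Hᵀ x, transpose_transpose]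
    have h2 : b ⬝ᵥ Fᵀ *ᵥ a = a ⬝ᵥ F *ᵥ b := by
      rw [dotProduct_mulVec, vecMul_transpose, dotProduct_comm]
    rw [h2]
    have : a ⬝ᵥ F *ᵥ b = a ⬝ᵥ w := rfl
    rw [this]
    ring
  rw [show (Q + H * F * E + Eᵀ * Fᵀ * Hᵀ).mulVec x
      = (Q + H * F * E + Eᵀ * Fᵀ * Hᵀ) *ᵥ x from rfl, hexp2]
  have hinv2 : 0 ≤ (ε ^ 2)⁻¹ := by positivity
  have h3 : (ε ^ 2)⁻¹ * (w ⬝ᵥ w) ≤ (ε ^ 2)⁻¹ * (b ⬝ᵥ R *ᵥ b) :=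
    mul_le_mul_of_nonneg_left hcon hinv2
  linarith

theorem petersen_lemma_norm_bounded (k r s : ℕ)
    (Q : Matrix (Fin k) (Fin k) ℝ) (hQ : Q.IsSymm)
    (H : Matrix (Fin k) (Fin r) ℝ) (E : Matrix (Fin s) (Fin k) ℝ)
    (R : Matrix (Fin s) (Fin s) ℝ) (hRsymm : R.IsSymm) (hR : R.PosDef) :
    (∀ F : Matrix (Fin r) (Fin s) ℝ, (R - Fᵀ * F).PosSemidef →
        NegDef (Q + H * F * E + Eᵀ * Fᵀ * Hᵀ)) ↔
    (∃ ε : ℝ, 0 < ε ∧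
        NegDef (Q + ε ^ 2 • (H * Hᵀ) + (ε ^ 2)⁻¹ • (Eᵀ * R * E))) := by
  constructor
  · intro hF
    rcases Nat.eq_zero_or_pos k with hk0 | hk
    · subst hk0
      exact ⟨1, one_pos, fun x hx => absurd (funext fun i => i.elim0) hx⟩
    · have hpt : ∀ x : Fin k → ℝ, x ≠ 0 →
          x ⬝ᵥ Q *ᵥ x + 2 * Real.sqrt ((x ⬝ᵥ (H * Hᵀ) *ᵥ x) * (x ⬝ᵥ (Eᵀ * R * E) *ᵥ x)) < 0 :=
        pointwise_of_forall Q H E R hRsymm hR hF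
      have hQs : Qᵀ = Q := hQ
      have hGs : (H * Hᵀ)ᵀ = H * Hᵀ := by rw [transpose_mul, transpose_transpose]
      have hKs : (Eᵀ * R * E)ᵀ = Eᵀ * R * E := by
        rw [transpose_mul, transpose_mul, transpose_transpose]
        rw [show Rᵀ = R from hRsymm, Matrix.mul_assoc]
      have hGpsd : ∀ x, 0 ≤ x ⬝ᵥ (H * Hᵀ) *ᵥ x := by
        intro x; rw [quad_mul H Hᵀ x]; exact dot_self_nonneg _
      have hRpsd : ∀ y, 0 ≤ y ⬝ᵥ R *ᵥ y := fun y => by simpa using hR.posSemidef.dotProduct_mulVec_nonneg y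
      have hKpsd : ∀ x, 0 ≤ x ⬝ᵥ (Eᵀ * R * E) *ᵥ x := by
        intro x
        have h1 := quad_sandwich Eᵀ R E x
        rw [transpose_transpose] at h1
        rw [h1]; exact hRpsd _
      have hpt' : ∀ x : Fin k → ℝ, x ⬝ᵥ x = 1 →
          x ⬝ᵥ Q *ᵥ x + 2 * Real.sqrt ((x ⬝ᵥ (H * Hᵀ) *ᵥ x) * (x ⬝ᵥ (Eᵀ * R * E) *ᵥ x)) < 0 := by
        intro x hx1
        apply hpt x
        intro h0
        rw [h0] at hx1
        simp at hx1
      obtain ⟨τ, hτ0, hτ⟩ := petersen_perturb hk Q (H * Hᵀ) (Eᵀ * R * E)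
        hQs hGs hKs hGpsd hKpsd hpt'
      refine ⟨Real.sqrt τ, Real.sqrt_pos.mpr hτ0, ?_⟩
      have hε2 : Real.sqrt τ ^ 2 = τ := Real.sq_sqrt hτ0.le
      intro x hx
      rw [show (Q + Real.sqrt τ ^ 2 • (H * Hᵀ) + (Real.sqrt τ ^ 2)⁻¹ • (Eᵀ * R * E)).mulVec x
          = (Q + Real.sqrt τ ^ 2 • (H * Hᵀ) + (Real.sqrt τ ^ 2)⁻¹ • (Eᵀ * R * E)) *ᵥ x from rfl]
      rw [hε2, quad_decomp]
      have hall := sphere_to_all' (Q + τ • (H * Hᵀ) + τ⁻¹ • (Eᵀ * R * E)) (by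
        intro y hy1
        rw [quad_decomp]
        exact hτ y hy1) x hx
      rw [quad_decomp] at hall
      exact hall
  · rintro ⟨ε, hε, hneg⟩ F hFc
    exact petersen_backward Q H E R hε hneg F hFc
end
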